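/- Let n ≥ 1, let B₀ be a real symmetric positive semidefinite n×n matrix with smallest eigenvalue λ₀, let Δ ≥ 0 and y ∈ ℝⁿ. Let A : [0,∞) → (real symmetric n×n matrices) be continuous with ‖A(s) − B₀‖_op ≤ nΔ for all s ≥ 0, and let u, v : [0,∞) → ℝⁿ be differentiable with u'(s) = −(1/n)·A(s)·u(s), v'(s) = −(1/n)·B₀·v(s) for all s ≥ 0, and u(0) = v(0) = −y. Then for all t ≥ 0, ‖u(t) − v(t)‖₂ ≤ ‖y‖₂ · Δ · t · e^{−(λ₀ − nΔ)·t/n}. -/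

import Mathlib

open Real Matrix Set

private lemma sumsq_nonneg {n : ℕ} (w : Fin n → ℝ) : 0 ≤ ∑ i, w i ^ 2 :=
  Finset.sum_nonneg fun _ _ => sq_nonneg _

private lemma cs_dot {n : ℕ} (w z : Fin n → ℝ) :
    w ⬝ᵥ z ≤ Real.sqrt (∑ i, w i ^ 2) * Real.sqrt (∑ i, z i ^ 2) := by
  have h2 : (∑ i, w i * z i) ^ 2 ≤ (∑ i, w i ^ 2) * ∑ i, z i ^ 2 :=
    Finset.sum_mul_sq_le_sq_mul_sq _ _ _
  calc w ⬝ᵥ z = ∑ i, w i * z i := rfl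
    _ ≤ |∑ i, w i * z i| := le_abs_self _
    _ = Real.sqrt ((∑ i, w i * z i) ^ 2) := (Real.sqrt_sq_eq_abs _).symm
    _ ≤ Real.sqrt ((∑ i, w i ^ 2) * ∑ i, z i ^ 2) := Real.sqrt_le_sqrt h2
    _ = _ := Real.sqrt_mul (sumsq_nonneg w) _

private lemma cs_dot' {n : ℕ} (w z : Fin n → ℝ) :
    -(Real.sqrt (∑ i, w i ^ 2) * Real.sqrt (∑ i, z i ^ 2)) ≤ w ⬝ᵥ z := by
  have h := cs_dot (fun i => -w i) z
  have hs : (∑ i, (-w i) ^ 2) = ∑ i, w i ^ 2 := by simp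
  rw [hs] at h
  have hd : (fun i => -w i) ⬝ᵥ z = -(w ⬝ᵥ z) := by
    simp [dotProduct]
  rw [hd] at h
  linarith

private lemma hasDerivAt_sum_sq {n : ℕ} (w : ℝ → Fin n → ℝ) (w' : Fin n → ℝ) (x : ℝ)
    (h : HasDerivAt w w' x) :
    HasDerivAt (fun t => ∑ i, (w t i) ^ 2) (2 * (w x ⬝ᵥ w')) x := by
  have hco : ∀ i, HasDerivAt (fun t => w t i) (w' i) x := fun i => hasDerivAt_pi.1 h i
  have hsum := HasDerivAt.fun_sum (u := Finset.univ)
    (A := fun i t => (w t i) ^ 2) (A' := fun i => 2 * (w x i) ^ 1 * w' i)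
    (fun i _ => (hco i).pow 2)
  refine hsum.congr_deriv ?_
  simp only [dotProduct, Finset.mul_sum, pow_one]
  exact Finset.sum_congr rfl fun i _ => by ring

private lemma exp_hasDerivAt (M x : ℝ) :
    HasDerivAt (fun y : ℝ => Real.exp (M * y)) (Real.exp (M * x) * M) x := by
  have h1 : HasDerivAt (fun y : ℝ => M * y) M x := by
    simpa using (hasDerivAt_id x).const_mul M
  exact h1.exp

private lemma strict_step1 (K1 c Ny E1 M : ℝ) (hc : 0 < c) (hcg : 0 < c - Ny * E1)
    (hM : 0 < M - K1) :
    2 * (K1 * c ^ 2) < 2 * c * (K1 * (Ny * E1) + M * (c - Ny * E1)) := by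
  nlinarith [mul_pos (mul_pos hc hcg) hM]

private lemma strict_step2 (K2 c Ny Δ E1 E2 x : ℝ) (hcpos : 0 < c)
    (hcg : 0 < c - Ny * Δ * (x * E2)) (hM : 0 < (|K2| + 1) - K2)
    (hexp : Δ * (Ny * E1) ≤ Ny * Δ * E2) :
    2 * (K2 * c ^ 2 + Δ * c * (Ny * E1)) <
      2 * c * ((Ny * Δ * E2 + K2 * (Ny * Δ * (x * E2)))
        + (|K2| + 1) * (c - Ny * Δ * (x * E2))) := by
  have hgap : 0 < (|K2| + 1) - K2 := hM
  nlinarith [mul_pos (mul_pos hcpos hcg) hgap,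
    mul_le_mul_of_nonneg_left hexp hcpos.le]

/-- Barrier-comparison lemma: if `f' x < 2c(g' x + M(c - g x))` whenever `f x = c²`
with `c > g x`, and `f 0 ≤ g 0 ^ 2`, then `f b ≤ g b ^ 2`. -/
private lemma barrier_sq (b M : ℝ) (f f' g g' : ℝ → ℝ)
    (hf : ∀ x ∈ Icc (0:ℝ) b, HasDerivAt f (f' x) x)
    (hg : ∀ x, HasDerivAt g (g' x) x)
    (hgn : ∀ x ∈ Icc (0:ℝ) b, 0 ≤ g x)
    (h0 : f 0 ≤ (g 0) ^ 2) (hb : 0 ≤ b)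
    (hslope : ∀ x ∈ Icc (0:ℝ) b, ∀ c : ℝ, g x < c → f x = c ^ 2 →
      f' x < 2 * c * (g' x + M * (c - g x))) :
    f b ≤ (g b) ^ 2 := by
  have key : ∀ ε : ℝ, 0 < ε → f b ≤ (g b + ε * Real.exp (M * b)) ^ 2 := by
    intro ε hε
    set B : ℝ → ℝ := fun x => (g x + ε * Real.exp (M * x)) ^ 2 with hBdef
    set B' : ℝ → ℝ := fun x =>
      2 * (g x + ε * Real.exp (M * x)) ^ 1 *
        (g' x + ε * (Real.exp (M * x) * M)) with hB'def
    have hBd : ∀ x, HasDerivAt B (B' x) x := by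
      intro x
      exact ((hg x).add ((exp_hasDerivAt M x).const_mul ε)).pow 2
    have hcont : ContinuousOn f (Icc 0 b) :=
      fun x hx => (hf x hx).continuousAt.continuousWithinAt
    have hfd : ∀ x ∈ Ico (0:ℝ) b, HasDerivWithinAt f (f' x) (Ici x) x :=
      fun x hx => (hf x ⟨hx.1, le_of_lt hx.2⟩).hasDerivWithinAt
    have h0' : f 0 ≤ B 0 := by
      have h1 : (g 0) ^ 2 ≤ (g 0 + ε * Real.exp (M * 0)) ^ 2 := by
        nlinarith [hgn 0 (left_mem_Icc.2 hb), mul_pos hε (Real.exp_pos (M * 0))]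
      exact le_trans h0 h1
    have hbound : ∀ x ∈ Ico (0:ℝ) b, f x = B x → f' x < B' x := by
      intro x hx hfx
      have hxm : x ∈ Icc (0:ℝ) b := ⟨hx.1, le_of_lt hx.2⟩
      have hpos : 0 < ε * Real.exp (M * x) := mul_pos hε (Real.exp_pos _)
      have hc : g x < g x + ε * Real.exp (M * x) := by linarith
      have h2 := hslope x hxm (g x + ε * Real.exp (M * x)) hc hfx
      calc f' x < 2 * (g x + ε * Real.exp (M * x)) *
          (g' x + M * ((g x + ε * Real.exp (M * x)) - g x)) := h2
        _ = B' x := by simp only [hB'def, pow_one]; ring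
    exact image_le_of_deriv_right_lt_deriv_boundary hcont hfd h0' hBd hbound
      (right_mem_Icc.2 hb)
  have hlim : Filter.Tendsto (fun ε : ℝ => (g b + ε * Real.exp (M * b)) ^ 2)
      (nhdsWithin 0 (Set.Ioi 0)) (nhds ((g b) ^ 2)) := by
    have hc : Continuous fun ε : ℝ => (g b + ε * Real.exp (M * b)) ^ 2 := by continuity
    have h2 := (hc.tendsto 0).mono_left
      (nhdsWithin_le_nhds : nhdsWithin (0:ℝ) (Set.Ioi 0) ≤ nhds 0)
    simpa using h2
  refine ge_of_tendsto hlim ?_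
  filter_upwards [self_mem_nhdsWithin] with ε hε
  exact key ε hε

set_option maxHeartbeats 1000000 in
/-- **Grönwall-type comparison of the network residual with the NTK residual.**
Let `B₀` be symmetric positive semidefinite with smallest eigenvalue `λ₀`
(smallest value of `vᵀB₀v` over Euclidean-unit vectors `v`), let `Δ ≥ 0`, and suppose
`‖A(s) − B₀‖_op ≤ nΔ` for all `s ≥ 0` (operator norm w.r.t. the Euclidean norm).
If `u' = −(1/n)A(s)u`, `v' = −(1/n)B₀v` with `u(0) = v(0) = −y`, then
`‖u(t) − v(t)‖₂ ≤ ‖y‖₂ Δ t e^{−(λ₀ − nΔ)t/n}` for all `t ≥ 0`. -/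
theorem residual_comparison_gronwall
    (n : ℕ) (hn : 1 ≤ n) (B₀ : Matrix (Fin n) (Fin n) ℝ) (lam0 Δ : ℝ)
    (y : Fin n → ℝ)
    (hB₀symm : B₀.IsSymm)
    (hB₀psd : ∀ v : Fin n → ℝ, 0 ≤ v ⬝ᵥ B₀.mulVec v)
    (hlam0 : IsLeast
      {r : ℝ | ∃ v : Fin n → ℝ, (∑ i, v i ^ 2) = 1 ∧ r = v ⬝ᵥ B₀.mulVec v} lam0)
    (hΔ : 0 ≤ Δ)
    (A : ℝ → Matrix (Fin n) (Fin n) ℝ) (hA : Continuous A)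
    (hop : ∀ s : ℝ, 0 ≤ s → ∀ w : Fin n → ℝ,
      Real.sqrt (∑ i, ((A s - B₀).mulVec w i) ^ 2) ≤
        (n : ℝ) * Δ * Real.sqrt (∑ i, w i ^ 2))
    (u v : ℝ → Fin n → ℝ)
    (hu : ∀ s : ℝ, 0 ≤ s → HasDerivAt u (-(1 / (n : ℝ)) • (A s).mulVec (u s)) s)
    (hv : ∀ s : ℝ, 0 ≤ s → HasDerivAt v (-(1 / (n : ℝ)) • B₀.mulVec (v s)) s)
    (hu0 : u 0 = -y) (hv0 : v 0 = -y) :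
    ∀ t : ℝ, 0 ≤ t →
      Real.sqrt (∑ i, (u t i - v t i) ^ 2) ≤
        Real.sqrt (∑ i, y i ^ 2) * Δ * t * Real.exp (-((lam0 - n * Δ) * t / n)) := by
  have hn0 : (0:ℝ) < (n:ℝ) := by exact_mod_cast hn
  set Ny : ℝ := Real.sqrt (∑ i, y i ^ 2) with hNy
  have hNyn : 0 ≤ Ny := Real.sqrt_nonneg _
  have hNy2 : Ny ^ 2 = ∑ i, y i ^ 2 := Real.sq_sqrt (sumsq_nonneg y)
  -- smallest eigenvalue bound
  have hlamle : ∀ w : Fin n → ℝ, lam0 * (∑ i, w i ^ 2) ≤ w ⬝ᵥ B₀.mulVec w := by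
    intro w
    by_cases hw : (∑ i, w i ^ 2) = 0
    · have hwz : w = 0 := by
        funext i
        have h1 := (Finset.sum_eq_zero_iff_of_nonneg
          (fun j _ => sq_nonneg (w j))).1 hw i (Finset.mem_univ i)
        exact pow_eq_zero_iff (by norm_num) |>.1 h1
      simp [hwz, hw]
    · have hs : 0 < ∑ i, w i ^ 2 := lt_of_le_of_ne (sumsq_nonneg w) (Ne.symm hw)
      set s := ∑ i, w i ^ 2 with hsdef
      set w1 : Fin n → ℝ := (Real.sqrt s)⁻¹ • w with hw1
      have hsq : Real.sqrt s ^ 2 = s := Real.sq_sqrt hs.le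
      have hsp : 0 < Real.sqrt s := Real.sqrt_pos.2 hs
      have hw1sum : (∑ i, w1 i ^ 2) = 1 := by
        simp only [hw1, Pi.smul_apply, smul_eq_mul, mul_pow]
        rw [← Finset.mul_sum, ← hsdef]
        rw [← hsq]
        field_simp
        rw [Real.sqrt_sq hsp.le]
      have hmem : w1 ⬝ᵥ B₀.mulVec w1 ∈
          {r : ℝ | ∃ v : Fin n → ℝ, (∑ i, v i ^ 2) = 1 ∧ r = v ⬝ᵥ B₀.mulVec v} :=
        ⟨w1, hw1sum, rfl⟩
      have hle := hlam0.2 hmem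
      have hquad : w1 ⬝ᵥ B₀.mulVec w1 = (Real.sqrt s)⁻¹ ^ 2 * (w ⬝ᵥ B₀.mulVec w) := by
        simp only [hw1, Matrix.mulVec_smul, smul_dotProduct, dotProduct_smul,
          smul_eq_mul]
        ring
      rw [hquad] at hle
      have h1 : lam0 * s ≤ (Real.sqrt s)⁻¹ ^ 2 * (w ⬝ᵥ B₀.mulVec w) * s :=
        mul_le_mul_of_nonneg_right hle hs.le
      have h2 : (Real.sqrt s)⁻¹ ^ 2 * (w ⬝ᵥ B₀.mulVec w) * s = w ⬝ᵥ B₀.mulVec w := by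
        rw [← hsq]
        field_simp
        rw [Real.sqrt_sq hsp.le]
      rw [h2] at h1
      exact h1
  -- Step 1: bound on ‖v s‖
  set K1 : ℝ := -(lam0 / n) with hK1
  have hg1d : ∀ x : ℝ, HasDerivAt (fun x => Ny * Real.exp (K1 * x))
      (K1 * (Ny * Real.exp (K1 * x))) x := by
    intro x
    have h1 := (exp_hasDerivAt K1 x).const_mul Ny
    have h2 : Ny * (Real.exp (K1 * x) * K1) = K1 * (Ny * Real.exp (K1 * x)) := by ring
    rw [h2] at h1
    exact h1
  have hg1n : ∀ x : ℝ, 0 ≤ Ny * Real.exp (K1 * x) :=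
    fun x => mul_nonneg hNyn (Real.exp_pos _).le
  have step1 : ∀ s : ℝ, 0 ≤ s →
      Real.sqrt (∑ i, (v s i) ^ 2) ≤ Ny * Real.exp (K1 * s) := by
    intro s hs
    have hkey : (∑ i, (v s i) ^ 2) ≤ (Ny * Real.exp (K1 * s)) ^ 2 := by
      refine barrier_sq s (|lam0| / n + 1) (fun x => ∑ i, (v x i) ^ 2)
        (fun x => 2 * (v x ⬝ᵥ (-(1 / (n : ℝ)) • B₀.mulVec (v x))))
        (fun x => Ny * Real.exp (K1 * x)) (fun x => K1 * (Ny * Real.exp (K1 * x)))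
        ?_ hg1d (fun x _ => hg1n x) ?_ hs ?_
      · intro x hx
        exact hasDerivAt_sum_sq v _ x (hv x hx.1)
      · show (∑ i, (v 0 i) ^ 2) ≤ (Ny * Real.exp (K1 * 0)) ^ 2
        rw [hv0]
        simp only [mul_zero, Real.exp_zero, mul_one]
        rw [hNy2]
        simp
      · intro x hx c hc hfx
        show 2 * (v x ⬝ᵥ (-(1 / (n : ℝ)) • B₀.mulVec (v x))) <
          2 * c * (K1 * (Ny * Real.exp (K1 * x)) + (|lam0| / n + 1) * (c - Ny * Real.exp (K1 * x)))
        have hfx' : (∑ i, (v x i) ^ 2) = c ^ 2 := hfx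
        have hcpos : 0 < c := lt_of_le_of_lt (hg1n x) hc
        have hquad := hlamle (v x)
        rw [hfx'] at hquad
        have hdot : v x ⬝ᵥ (-(1 / (n : ℝ)) • B₀.mulVec (v x)) =
            -(1 / (n : ℝ)) * (v x ⬝ᵥ B₀.mulVec (v x)) := by
          rw [dotProduct_smul]; simp [smul_eq_mul]
        rw [hdot]
        have hstep : 2 * (-(1 / (n : ℝ)) * (v x ⬝ᵥ B₀.mulVec (v x)))
            ≤ 2 * (K1 * c ^ 2) := by
          have hidL : 2 * (-(1 / (n : ℝ)) * (v x ⬝ᵥ B₀.mulVec (v x)))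
              = -(2 * (1 / (n : ℝ) * (v x ⬝ᵥ B₀.mulVec (v x)))) := by ring
          have hidR : 2 * (K1 * c ^ 2) = -(2 * (1 / (n : ℝ) * (lam0 * c ^ 2))) := by
            rw [hK1]; ring
          rw [hidL, hidR]
          have hm := mul_le_mul_of_nonneg_left hquad (by positivity : (0:ℝ) ≤ 1 / n)
          linarith
        refine lt_of_le_of_lt hstep ?_
        have hgap : 0 < (|lam0| / n + 1) - K1 := by
          rw [hK1]
          have h1 : -lam0 ≤ |lam0| := neg_le_abs _
          have h2 : -lam0 / (n : ℝ) ≤ |lam0| / n := by gcongr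
          rw [neg_div] at h2
          linarith
        have hc' : Ny * Real.exp (K1 * x) < c := hc
        have hcg : 0 < c - Ny * Real.exp (K1 * x) := by linarith
        exact strict_step1 K1 c Ny (Real.exp (K1 * x)) (|lam0| / n + 1) hcpos hcg hgap
    calc Real.sqrt (∑ i, (v s i) ^ 2)
        ≤ Real.sqrt ((Ny * Real.exp (K1 * s)) ^ 2) := Real.sqrt_le_sqrt hkey
      _ = Ny * Real.exp (K1 * s) := Real.sqrt_sq (hg1n s)
  -- Step 2
  intro t ht
  set K2 : ℝ := ((n : ℝ) * Δ - lam0) / n with hK2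
  have hK12 : ∀ x : ℝ, 0 ≤ x → K1 * x ≤ K2 * x := by
    intro x hx
    have h1 : K2 - K1 = Δ := by
      rw [hK1, hK2]
      field_simp
      ring
    nlinarith [h1]
  have hg2d : ∀ x : ℝ, HasDerivAt (fun x => Ny * Δ * (x * Real.exp (K2 * x)))
      (Ny * Δ * Real.exp (K2 * x) + K2 * (Ny * Δ * (x * Real.exp (K2 * x)))) x := by
    intro x
    have h1 := ((hasDerivAt_id x).mul (exp_hasDerivAt K2 x)).const_mul (Ny * Δ)
    have h2 : Ny * Δ * (1 * Real.exp (K2 * x) + id x * (Real.exp (K2 * x) * K2))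
        = Ny * Δ * Real.exp (K2 * x) + K2 * (Ny * Δ * (x * Real.exp (K2 * x))) := by
      simp only [id_eq]; ring
    rw [h2] at h1
    exact h1
  have hg2n : ∀ x ∈ Icc (0:ℝ) t, 0 ≤ Ny * Δ * (x * Real.exp (K2 * x)) := by
    intro x hx
    exact mul_nonneg (mul_nonneg hNyn hΔ) (mul_nonneg hx.1 (Real.exp_pos _).le)
  have hkey2 : (∑ i, (u t i - v t i) ^ 2) ≤ (Ny * Δ * (t * Real.exp (K2 * t))) ^ 2 := by
    refine barrier_sq t (|K2| + 1) (fun x => ∑ i, (u x i - v x i) ^ 2)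
      (fun x => 2 * ((u x - v x) ⬝ᵥ
        (-(1 / (n : ℝ)) • (A x).mulVec (u x) - -(1 / (n : ℝ)) • B₀.mulVec (v x))))
      (fun x => Ny * Δ * (x * Real.exp (K2 * x)))
      (fun x => Ny * Δ * Real.exp (K2 * x) + K2 * (Ny * Δ * (x * Real.exp (K2 * x))))
      ?_ hg2d hg2n ?_ ht ?_
    · intro x hx
      have hw : HasDerivAt (fun s => u s - v s)
          (-(1 / (n : ℝ)) • (A x).mulVec (u x) - -(1 / (n : ℝ)) • B₀.mulVec (v x)) x :=
        (hu x hx.1).sub (hv x hx.1)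
      exact hasDerivAt_sum_sq (fun s => u s - v s) _ x hw
    · show (∑ i, (u 0 i - v 0 i) ^ 2) ≤ (Ny * Δ * (0 * Real.exp (K2 * 0))) ^ 2
      rw [hu0, hv0]
      simp
    · intro x hx c hc hfx
      show 2 * ((u x - v x) ⬝ᵥ
          (-(1 / (n : ℝ)) • (A x).mulVec (u x) - -(1 / (n : ℝ)) • B₀.mulVec (v x))) <
        2 * c * ((Ny * Δ * Real.exp (K2 * x) + K2 * (Ny * Δ * (x * Real.exp (K2 * x))))
          + (|K2| + 1) * (c - Ny * Δ * (x * Real.exp (K2 * x))))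
      set w : Fin n → ℝ := u x - v x with hwdef
      have hfx' : (∑ i, w i ^ 2) = c ^ 2 := hfx
      have hcpos : 0 < c := lt_of_le_of_lt (hg2n x hx) hc
      have hNw : Real.sqrt (∑ i, w i ^ 2) = c := by
        rw [hfx']; exact Real.sqrt_sq hcpos.le
      -- algebraic decomposition of the derivative
      have halg : -(1 / (n : ℝ)) • (A x).mulVec (u x) - -(1 / (n : ℝ)) • B₀.mulVec (v x)
          = -(1 / (n : ℝ)) • (B₀.mulVec w + (A x - B₀).mulVec w + (A x - B₀).mulVec (v x)) := by
        simp only [hwdef, Matrix.sub_mulVec, Matrix.mulVec_sub, smul_sub, smul_add]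
        module
      have hdot : w ⬝ᵥ (-(1 / (n : ℝ)) • (A x).mulVec (u x) - -(1 / (n : ℝ)) • B₀.mulVec (v x))
          = -(1 / (n : ℝ)) * (w ⬝ᵥ B₀.mulVec w + w ⬝ᵥ (A x - B₀).mulVec w
              + w ⬝ᵥ (A x - B₀).mulVec (v x)) := by
        rw [halg, dotProduct_smul, dotProduct_add, dotProduct_add]
        simp [smul_eq_mul]
      rw [hdot]
      -- bounds on the three dot products
      have hq1 : lam0 * c ^ 2 ≤ w ⬝ᵥ B₀.mulVec w := by
        rw [← hfx']; exact hlamle w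
      have hq2 : -((n : ℝ) * Δ * c ^ 2) ≤ w ⬝ᵥ (A x - B₀).mulVec w := by
        have hcs := cs_dot' w ((A x - B₀).mulVec w)
        have hopb := hop x hx.1 w
        rw [hNw] at hopb
        have h3 : Real.sqrt (∑ i, w i ^ 2) * Real.sqrt (∑ i, ((A x - B₀).mulVec w i) ^ 2)
            ≤ c * ((n : ℝ) * Δ * c) := by
          rw [hNw]
          exact mul_le_mul_of_nonneg_left hopb hcpos.le
        linarith [hcs, h3]
      have hq3 : -((n : ℝ) * Δ * c * (Ny * Real.exp (K1 * x))) ≤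
          w ⬝ᵥ (A x - B₀).mulVec (v x) := by
        have hcs := cs_dot' w ((A x - B₀).mulVec (v x))
        have hopb := hop x hx.1 (v x)
        have hvb := step1 x hx.1
        have h3 : Real.sqrt (∑ i, w i ^ 2) * Real.sqrt (∑ i, ((A x - B₀).mulVec (v x) i) ^ 2)
            ≤ c * ((n : ℝ) * Δ * (Ny * Real.exp (K1 * x))) := by
          rw [hNw]
          have h4 : Real.sqrt (∑ i, ((A x - B₀).mulVec (v x) i) ^ 2)
              ≤ (n : ℝ) * Δ * (Ny * Real.exp (K1 * x)) := by
            refine le_trans hopb ?_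
            exact mul_le_mul_of_nonneg_left hvb (by positivity)
          exact mul_le_mul_of_nonneg_left h4 hcpos.le
        linarith [hcs, h3]
      -- combine
      have hstep : 2 * (-(1 / (n : ℝ)) * (w ⬝ᵥ B₀.mulVec w + w ⬝ᵥ (A x - B₀).mulVec w
            + w ⬝ᵥ (A x - B₀).mulVec (v x)))
          ≤ 2 * (K2 * c ^ 2 + Δ * c * (Ny * Real.exp (K1 * x))) := by
        have hsum : lam0 * c ^ 2 - (n : ℝ) * Δ * c ^ 2
              - (n : ℝ) * Δ * c * (Ny * Real.exp (K1 * x))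
            ≤ w ⬝ᵥ B₀.mulVec w + w ⬝ᵥ (A x - B₀).mulVec w
              + w ⬝ᵥ (A x - B₀).mulVec (v x) := by linarith
        have hmul := mul_le_mul_of_nonneg_left hsum (by positivity : (0:ℝ) ≤ 1 / n)
        have hne : (n:ℝ) ≠ 0 := ne_of_gt hn0
        have hidL : 2 * (-(1 / (n : ℝ)) * (w ⬝ᵥ B₀.mulVec w + w ⬝ᵥ (A x - B₀).mulVec w
              + w ⬝ᵥ (A x - B₀).mulVec (v x)))
            = -(2 * (1 / (n : ℝ) * (w ⬝ᵥ B₀.mulVec w + w ⬝ᵥ (A x - B₀).mulVec w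
              + w ⬝ᵥ (A x - B₀).mulVec (v x)))) := by ring
        have hidR : 2 * (K2 * c ^ 2 + Δ * c * (Ny * Real.exp (K1 * x)))
            = -(2 * (1 / (n : ℝ) * (lam0 * c ^ 2 - (n : ℝ) * Δ * c ^ 2
              - (n : ℝ) * Δ * c * (Ny * Real.exp (K1 * x))))) := by
          rw [hK2]
          field_simp
          ring
        rw [hidL, hidR]
        linarith
      refine lt_of_le_of_lt hstep ?_
      -- final strict inequality
      have hc' : Ny * Δ * (x * Real.exp (K2 * x)) < c := hc
      have hcg : 0 < c - Ny * Δ * (x * Real.exp (K2 * x)) := by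
        linarith
      have hgap : 0 < (|K2| + 1) - K2 := by
        have h6 := le_abs_self K2; linarith
      have hexp : Δ * (Ny * Real.exp (K1 * x)) ≤ Ny * Δ * Real.exp (K2 * x) := by
        have h5 : Real.exp (K1 * x) ≤ Real.exp (K2 * x) :=
          Real.exp_le_exp.2 (hK12 x hx.1)
        calc Δ * (Ny * Real.exp (K1 * x)) = Ny * Δ * Real.exp (K1 * x) := by ring
          _ ≤ Ny * Δ * Real.exp (K2 * x) :=
              mul_le_mul_of_nonneg_left h5 (mul_nonneg hNyn hΔ)
      exact strict_step2 K2 c Ny Δ (Real.exp (K1 * x)) (Real.exp (K2 * x)) x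
        hcpos hcg hgap hexp
  -- conclude
  have harg : K2 * t = -((lam0 - (n : ℝ) * Δ) * t / n) := by
    rw [hK2]; ring
  calc Real.sqrt (∑ i, (u t i - v t i) ^ 2)
      ≤ Real.sqrt ((Ny * Δ * (t * Real.exp (K2 * t))) ^ 2) := Real.sqrt_le_sqrt hkey2
    _ = Ny * Δ * (t * Real.exp (K2 * t)) := by
        refine Real.sqrt_sq ?_
        exact mul_nonneg (mul_nonneg hNyn hΔ) (mul_nonneg ht (Real.exp_pos _).le)
    _ = Ny * Δ * t * Real.exp (-((lam0 - (n : ℝ) * Δ) * t / n)) := by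
        rw [← harg]; ring
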